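/- Let t ↦ N(t) ∈ B(X,Y) be strongly measurable on a σ-finite measure space (Ω,μ) such that ∫_Ω ‖N(t)x‖ dμ(t) ≤ C‖x‖ for all x ∈ X. For h ∈ L∞(Ω) define N_h x = ∫_Ω h(t) N(t)x dμ(t). Then the set {N_h : ‖h‖_∞ ≤ 1} is R-bounded with R-bound at most 2C. -/

import Mathlib

open MeasureTheory ProbabilityTheory

/-- The Rademacher average `(E‖Σᵢ rᵢ xᵢ‖²)^{1/2}` of a finite sequence in `X`. -/
noncomputable def radAvg {X : Type*} [NormedAddCommGroup X] [NormedSpace ℝ X]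
    {n : ℕ} (x : Fin n → X) : ℝ :=
  Real.sqrt (((2 : ℝ) ^ n)⁻¹ *
    ∑ ε : Fin n → Bool, ‖∑ i, (if ε i then (1 : ℝ) else -1) • x i‖ ^ 2)

set_option linter.unnecessarySeqFocus false

namespace RboundAux

noncomputable def sg (b : Bool) : ℝ := if b then 1 else -1


noncomputable def wsum {n : ℕ} (c : Fin n → ℝ) (ρ : Fin n → Bool) : ℝ :=
  ∑ k, sg (ρ k) * c k

lemma cube_split {n : ℕ} (F : (Fin (n+1) → Bool) → ℝ) :
    ∑ η : Fin (n+1) → Bool, F η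
      = (∑ ε : Fin n → Bool, F (Fin.cons true ε))
        + ∑ ε : Fin n → Bool, F (Fin.cons false ε) := by
  have h1 : ∑ p : Bool × (Fin n → Bool), F (Fin.cons p.1 p.2)
      = ∑ b : Bool, ∑ ε : Fin n → Bool, F (Fin.cons b ε) :=
    Fintype.sum_prod_type _
  have h2 : ∑ η : Fin (n+1) → Bool, F η
      = ∑ p : Bool × (Fin n → Bool), F (Fin.cons p.1 p.2) :=
    (Fintype.sum_equiv (Fin.consEquiv fun _ => Bool) _ _ (fun p => rfl)).symm
  rw [h2, h1, Fintype.sum_bool]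

lemma card_cube (n : ℕ) : ((Finset.univ : Finset (Fin n → Bool)).card : ℝ) = (2:ℝ)^n := by
  simp [Finset.card_univ]

lemma wsum_cons {n : ℕ} (c : Fin (n+1) → ℝ) (b : Bool) (ε : Fin n → Bool) :
    wsum c (Fin.cons b ε) = sg b * c 0 + wsum (fun j => c j.succ) ε := by
  rw [wsum, Fin.sum_univ_succ]
  simp [wsum]

lemma wsum_sq {n : ℕ} (c : Fin n → ℝ) :
    ∑ ρ : Fin n → Bool, (wsum c ρ)^2 = (2:ℝ)^n * ∑ k, (c k)^2 := by
  induction n with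
  | zero => simp [wsum]
  | succ n ih =>
      rw [cube_split (fun ρ => (wsum c ρ)^2)]
      have key : (∑ ε : Fin n → Bool, (wsum c (Fin.cons true ε))^2)
            + ∑ ε : Fin n → Bool, (wsum c (Fin.cons false ε))^2
          = ∑ ε : Fin n → Bool, (2*(c 0)^2 + 2*(wsum (fun j => c j.succ) ε)^2) := by
        rw [← Finset.sum_add_distrib]
        refine Finset.sum_congr rfl fun ε _ => ?_
        rw [wsum_cons, wsum_cons]; simp [sg]; ring
      rw [key, Finset.sum_add_distrib, Finset.sum_const, nsmul_eq_mul, card_cube,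
        ← Finset.mul_sum, ih, Fin.sum_univ_succ (f := fun k => (c k)^2)]
      ring

lemma wsum_quad {n : ℕ} (c : Fin n → ℝ) :
    ∑ ρ : Fin n → Bool, (wsum c ρ)^4 ≤ 3 * (2:ℝ)^n * (∑ k, (c k)^2)^2 := by
  induction n with
  | zero => simp [wsum]
  | succ n ih =>
      rw [cube_split (fun ρ => (wsum c ρ)^4)]
      have key : (∑ ε : Fin n → Bool, (wsum c (Fin.cons true ε))^4)
            + ∑ ε : Fin n → Bool, (wsum c (Fin.cons false ε))^4
          = ∑ ε : Fin n → Bool, (2*(c 0)^4 + 12*(c 0)^2*(wsum (fun j => c j.succ) ε)^2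
              + 2*(wsum (fun j => c j.succ) ε)^4) := by
        rw [← Finset.sum_add_distrib]
        refine Finset.sum_congr rfl fun ε _ => ?_
        rw [wsum_cons, wsum_cons]; simp [sg]; ring
      rw [key, Finset.sum_add_distrib, Finset.sum_add_distrib, Finset.sum_const,
        nsmul_eq_mul, card_cube]
      have h2 : ∑ ε : Fin n → Bool, 12*(c 0)^2*(wsum (fun j => c j.succ) ε)^2
          = 12*(c 0)^2 * ((2:ℝ)^n * ∑ j : Fin n, (c j.succ)^2) := by
        rw [← Finset.mul_sum, wsum_sq]
      have h3 : ∑ ε : Fin n → Bool, 2*(wsum (fun j => c j.succ) ε)^4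
          = 2 * ∑ ε : Fin n → Bool, (wsum (fun j => c j.succ) ε)^4 := by
        rw [← Finset.mul_sum]
      rw [h2, h3, Fin.sum_univ_succ (f := fun k => (c k)^2)]
      have h4 := ih (fun j => c j.succ)
      have hq : (0:ℝ) ≤ (2:ℝ)^n := by positivity
      have hsq : (0:ℝ) ≤ (∑ j : Fin n, (c j.succ)^2) := by positivity
      have hp : (2:ℝ)^(n+1) = 2^n*2 := pow_succ 2 n
      nlinarith [sq_nonneg (c 0), mul_nonneg hq (sq_nonneg ((c 0)^2)),
        mul_nonneg (mul_nonneg hq hsq) (sq_nonneg (c 0))]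

/-- scalar Khintchine L¹–L² with constant √3, cleared form. -/
lemma khintchine {n : ℕ} (c : Fin n → ℝ) :
    ((2:ℝ)^n)^2 * ∑ k, (c k)^2 ≤ 3 * (∑ ρ : Fin n → Bool, |wsum c ρ|)^2 := by
  set σ2 : ℝ := ∑ k, (c k)^2 with hσ2
  have hσ2nn : 0 ≤ σ2 := by positivity
  rcases eq_or_lt_of_le hσ2nn with h0 | hpos
  · rw [← h0, mul_zero]
    positivity
  · set σ : ℝ := Real.sqrt σ2 with hσ
    have hσpos : 0 < σ := Real.sqrt_pos.mpr hpos
    have hσsq : σ^2 = σ2 := Real.sq_sqrt (le_of_lt hpos)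
    set s : ℝ := Real.sqrt 3 with hs
    have hspos : 0 < s := by rw [hs]; positivity
    have hssq : s^2 = 3 := Real.sq_sqrt (by norm_num)
    have hpt : ∀ x : ℝ, 9*σ^2*x^2 ≤ 6*s*σ^3*|x| + x^4 := by
      intro x
      have h1 : 0 ≤ |x| * (|x| - s*σ)^2 * (|x| + 2*s*σ) := by positivity
      have h2 : |x| * (|x| - s*σ)^2 * (|x| + 2*s*σ)
          = |x|^4 - 3*s^2*σ^2*|x|^2 + 2*s^2*s*σ^3*|x| := by ring
      rw [hssq] at h2
      have hx2 : |x|^2 = x^2 := sq_abs x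
      have hx4 : |x|^4 = x^4 := by
        rw [show (4:ℕ) = 2*2 from rfl, pow_mul, pow_mul, hx2]
      rw [hx2, hx4] at h2
      linarith [h1, h2.symm.le, h2.le]
    have hsum : 9*σ2*((2:ℝ)^n * σ2)
        ≤ 6*s*σ^3*(∑ ρ : Fin n → Bool, |wsum c ρ|) + 3*(2:ℝ)^n*σ2^2 := by
      have hA : ∑ ρ : Fin n → Bool, 9*σ^2*(wsum c ρ)^2
          = 9*σ2*((2:ℝ)^n * σ2) := by
        rw [← Finset.mul_sum, wsum_sq, hσsq]
      have hB : ∑ ρ : Fin n → Bool, 6*s*σ^3*|wsum c ρ|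
          = 6*s*σ^3*(∑ ρ : Fin n → Bool, |wsum c ρ|) := by
        rw [← Finset.mul_sum]
      calc 9*σ2*((2:ℝ)^n * σ2)
          = ∑ ρ : Fin n → Bool, 9*σ^2*(wsum c ρ)^2 := hA.symm
        _ ≤ ∑ ρ : Fin n → Bool, (6*s*σ^3*|wsum c ρ| + (wsum c ρ)^4) :=
            Finset.sum_le_sum fun ρ _ => hpt (wsum c ρ)
        _ = 6*s*σ^3*(∑ ρ : Fin n → Bool, |wsum c ρ|)
              + ∑ ρ : Fin n → Bool, (wsum c ρ)^4 := by
            rw [Finset.sum_add_distrib, hB]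
        _ ≤ 6*s*σ^3*(∑ ρ : Fin n → Bool, |wsum c ρ|) + 3*(2:ℝ)^n*σ2^2 := by
            have := wsum_quad c
            linarith
    have hkey : (2:ℝ)^n * σ2^2 ≤ s*σ^3*(∑ ρ : Fin n → Bool, |wsum c ρ|) := by
      nlinarith [hsum]
    have hW : 0 ≤ ∑ ρ : Fin n → Bool, |wsum c ρ| :=
      Finset.sum_nonneg fun ρ _ => abs_nonneg _
    have hq2 : (0:ℝ) ≤ (2:ℝ)^n * σ2^2 := by positivity
    have hprod : 0 ≤ s*σ^3*(∑ ρ : Fin n → Bool, |wsum c ρ|) := by positivity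
    have h2 : ((2:ℝ)^n * σ2^2)^2 ≤ (s*σ^3*(∑ ρ : Fin n → Bool, |wsum c ρ|))^2 := by
      apply sq_le_sq'
      · linarith
      · exact hkey
    have hσ6 : (σ^3)^2 = σ2^3 := by
      have h : (σ^3)^2 = (σ^2)^3 := by ring
      rw [h, hσsq]
    have hexp : (s*σ^3*(∑ ρ : Fin n → Bool, |wsum c ρ|))^2
        = 3 * σ2^3 * (∑ ρ : Fin n → Bool, |wsum c ρ|)^2 := by
      have h : (s*σ^3*(∑ ρ : Fin n → Bool, |wsum c ρ|))^2
          = s^2 * (σ^3)^2 * (∑ ρ : Fin n → Bool, |wsum c ρ|)^2 := by ring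
      rw [h, hssq, hσ6]
    rw [hexp] at h2
    have h3 : (((2:ℝ)^n)^2 * σ2) * σ2^3 ≤ (3 * (∑ ρ : Fin n → Bool, |wsum c ρ|)^2) * σ2^3 := by
      calc (((2:ℝ)^n)^2 * σ2) * σ2^3 = ((2:ℝ)^n * σ2^2)^2 := by ring
        _ ≤ 3 * σ2^3 * (∑ ρ : Fin n → Bool, |wsum c ρ|)^2 := h2
        _ = (3 * (∑ ρ : Fin n → Bool, |wsum c ρ|)^2) * σ2^3 := by ring
    exact le_of_mul_le_mul_right h3 (by positivity)



def flipAt {n : ℕ} (k : Fin n) (η : Fin n → Bool) : Fin n → Bool :=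
  Function.update η k (!(η k))

def negAll {n : ℕ} (η : Fin n → Bool) : Fin n → Bool := fun k => !(η k)

lemma negAll_invol {n : ℕ} : Function.Involutive (negAll (n := n)) := by
  intro η; funext k; simp [negAll]

lemma flipAt_invol {n : ℕ} (k : Fin n) : Function.Involutive (flipAt k) := by
  intro η; funext j
  by_cases h : j = k
  · subst h; simp [flipAt]
  · simp [flipAt, Function.update_of_ne h]

lemma sum_negAll {n : ℕ} (F : (Fin n → Bool) → ℝ) :
    ∑ η : Fin n → Bool, F (negAll η) = ∑ η : Fin n → Bool, F η :=
  Fintype.sum_bijective negAll (negAll_invol.bijective) _ _ (fun _ => rfl)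

lemma flipAt_cons_zero {n : ℕ} (b : Bool) (ε : Fin n → Bool) :
    flipAt 0 (Fin.cons b ε) = Fin.cons (!b) ε := by
  rw [flipAt]
  simp [Fin.update_cons_zero]

lemma flipAt_cons_succ {n : ℕ} (j : Fin n) (b : Bool) (ε : Fin n → Bool) :
    flipAt j.succ (Fin.cons b ε) = Fin.cons b (flipAt j ε) := by
  rw [flipAt, flipAt]
  simp [Fin.cons_update]

lemma negAll_cons {n : ℕ} (b : Bool) (ε : Fin n → Bool) :
    negAll (Fin.cons b ε) = Fin.cons (!b) (negAll ε) := by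
  funext j
  refine Fin.cases ?_ (fun i => ?_) j <;> simp [negAll]

lemma exp_sub {n : ℕ} (a b : (Fin n → Bool) → ℝ) :
    ∑ ε : Fin n → Bool, (a ε - b ε)^2
      = (∑ ε : Fin n → Bool, (a ε)^2) + (∑ ε : Fin n → Bool, (b ε)^2)
        - 2 * ∑ ε : Fin n → Bool, a ε * b ε := by
  have h : ∀ ε : Fin n → Bool, (a ε - b ε)^2
      = (a ε)^2 + (b ε)^2 - 2*(a ε * b ε) := fun ε => by ring
  rw [Finset.sum_congr rfl (fun ε _ => h ε), Finset.sum_sub_distrib,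
    Finset.sum_add_distrib, Finset.mul_sum]

/-- key variance inequality, cleared form:
`8(2ⁿ Σ G² − (ΣG)²) ≤ 2ⁿ (T'(G) + N'(G))`. -/
theorem varTN : ∀ (n : ℕ) (G : (Fin n → Bool) → ℝ),
    8 * ((2:ℝ)^n * (∑ η, (G η)^2) - (∑ η, G η)^2)
      ≤ (2:ℝ)^n * ((∑ k : Fin n, ∑ η, (G η - G (flipAt k η))^2)
                    + ∑ η, (G η - G (negAll η))^2) := by
  intro n
  induction n with
  | zero =>
      intro G
      have hneg : ∀ η : Fin 0 → Bool, negAll η = η := fun η => Subsingleton.elim _ _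
      simp [hneg]
  | succ n ih =>
      intro G
      have hQ0 : (0:ℝ) ≤ (2:ℝ)^n := by positivity
      -- structural rewrites
      have hsum1 : ∑ η : Fin (n+1) → Bool, G η
          = (∑ ε, G (Fin.cons true ε)) + ∑ ε, G (Fin.cons false ε) := cube_split G
      have hsum2 : ∑ η : Fin (n+1) → Bool, (G η)^2
          = (∑ ε, (G (Fin.cons true ε))^2) + ∑ ε, (G (Fin.cons false ε))^2 :=
        cube_split (fun η => (G η)^2)
      have hT0 : ∑ η : Fin (n+1) → Bool, (G η - G (flipAt 0 η))^2
          = 2 * ∑ ε, (G (Fin.cons true ε) - G (Fin.cons false ε))^2 := by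
        rw [cube_split (fun η => (G η - G (flipAt 0 η))^2)]
        simp only [flipAt_cons_zero, Bool.not_true, Bool.not_false]
        rw [Finset.mul_sum, ← Finset.sum_add_distrib]
        exact Finset.sum_congr rfl fun ε _ => by ring
      have hTsucc : ∀ j : Fin n, ∑ η : Fin (n+1) → Bool, (G η - G (flipAt j.succ η))^2
          = (∑ ε, (G (Fin.cons true ε) - G (Fin.cons true (flipAt j ε)))^2)
            + ∑ ε, (G (Fin.cons false ε) - G (Fin.cons false (flipAt j ε)))^2 := by
        intro j
        rw [cube_split (fun η => (G η - G (flipAt j.succ η))^2)]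
        simp only [flipAt_cons_succ]
      have hN : ∑ η : Fin (n+1) → Bool, (G η - G (negAll η))^2
          = 2 * ∑ ε, (G (Fin.cons true ε) - G (Fin.cons false (negAll ε)))^2 := by
        rw [cube_split (fun η => (G η - G (negAll η))^2)]
        simp only [negAll_cons, Bool.not_true, Bool.not_false]
        have e3 : ∑ ε, (G (Fin.cons false ε) - G (Fin.cons true (negAll ε)))^2
            = ∑ ε, (G (Fin.cons true ε) - G (Fin.cons false (negAll ε)))^2 := by
          rw [← sum_negAll (fun ε => (G (Fin.cons false ε) - G (Fin.cons true (negAll ε)))^2)]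
          refine Finset.sum_congr rfl fun ε _ => ?_
          rw [negAll_invol ε]
          ring
        rw [e3]; ring
      have hksum : ∑ k : Fin (n+1), ∑ η : Fin (n+1) → Bool, (G η - G (flipAt k η))^2
          = 2 * (∑ ε, (G (Fin.cons true ε) - G (Fin.cons false ε))^2)
            + ((∑ j : Fin n, ∑ ε, (G (Fin.cons true ε) - G (Fin.cons true (flipAt j ε)))^2)
               + ∑ j : Fin n, ∑ ε, (G (Fin.cons false ε) - G (Fin.cons false (flipAt j ε)))^2) := by
        rw [Fin.sum_univ_succ, hT0,
          Finset.sum_congr rfl (fun j _ => hTsucc j), Finset.sum_add_distrib]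
      -- IH instances
      have ihu := ih (fun ε => G (Fin.cons true ε))
      have ihv := ih (fun ε => G (Fin.cons false ε))
      -- rewrite the N-terms of the IHs via exp_sub
      have hNU : ∑ ε, ((G (Fin.cons true ε)) - G (Fin.cons true (negAll ε)))^2
          = 2 * (∑ ε, (G (Fin.cons true ε))^2)
            - 2 * ∑ ε, G (Fin.cons true ε) * G (Fin.cons true (negAll ε)) := by
        rw [exp_sub (fun ε => G (Fin.cons true ε)) (fun ε => G (Fin.cons true (negAll ε))),
          sum_negAll (fun ε => (G (Fin.cons true ε))^2)]
        ring
      have hNV : ∑ ε, ((G (Fin.cons false ε)) - G (Fin.cons false (negAll ε)))^2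
          = 2 * (∑ ε, (G (Fin.cons false ε))^2)
            - 2 * ∑ ε, G (Fin.cons false ε) * G (Fin.cons false (negAll ε)) := by
        rw [exp_sub (fun ε => G (Fin.cons false ε)) (fun ε => G (Fin.cons false (negAll ε))),
          sum_negAll (fun ε => (G (Fin.cons false ε))^2)]
        ring
      -- Cauchy–Schwarz for W
      have hcs : (∑ ε, ((G (Fin.cons true ε) + G (Fin.cons true (negAll ε)))
              - (G (Fin.cons false ε) + G (Fin.cons false (negAll ε)))))^2
          ≤ (2:ℝ)^n * ∑ ε, ((G (Fin.cons true ε) + G (Fin.cons true (negAll ε)))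
              - (G (Fin.cons false ε) + G (Fin.cons false (negAll ε))))^2 := by
        have h := sq_sum_le_card_mul_sum_sq
          (s := (Finset.univ : Finset (Fin n → Bool)))
          (f := fun ε => ((G (Fin.cons true ε) + G (Fin.cons true (negAll ε)))
              - (G (Fin.cons false ε) + G (Fin.cons false (negAll ε)))))
        rw [card_cube] at h
        exact h
      -- linear form of the CS sum
      have hWsum : ∑ ε, ((G (Fin.cons true ε) + G (Fin.cons true (negAll ε)))
              - (G (Fin.cons false ε) + G (Fin.cons false (negAll ε))))
          = 2 * (∑ ε, G (Fin.cons true ε)) - 2 * ∑ ε, G (Fin.cons false ε) := by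
        rw [Finset.sum_sub_distrib, Finset.sum_add_distrib, Finset.sum_add_distrib,
          sum_negAll (fun ε => G (Fin.cons true ε)),
          sum_negAll (fun ε => G (Fin.cons false ε))]
        ring
      -- quadratic form of the CS sum
      have hWsq : ∑ ε, ((G (Fin.cons true ε) + G (Fin.cons true (negAll ε)))
              - (G (Fin.cons false ε) + G (Fin.cons false (negAll ε))))^2
          = 2*(∑ ε, (G (Fin.cons true ε))^2) + 2*(∑ ε, (G (Fin.cons false ε))^2)
            + 2*(∑ ε, G (Fin.cons true ε) * G (Fin.cons true (negAll ε)))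
            + 2*(∑ ε, G (Fin.cons false ε) * G (Fin.cons false (negAll ε)))
            - 4*(∑ ε, G (Fin.cons true ε) * G (Fin.cons false ε))
            - 4*(∑ ε, G (Fin.cons true ε) * G (Fin.cons false (negAll ε))) := by
        have h1 : ∀ ε : Fin n → Bool,
            ((G (Fin.cons true ε) + G (Fin.cons true (negAll ε)))
              - (G (Fin.cons false ε) + G (Fin.cons false (negAll ε))))^2
            = (G (Fin.cons true ε))^2 + (G (Fin.cons true (negAll ε)))^2
              + (G (Fin.cons false ε))^2 + (G (Fin.cons false (negAll ε)))^2
              + 2*(G (Fin.cons true ε) * G (Fin.cons true (negAll ε)))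
              + 2*(G (Fin.cons false ε) * G (Fin.cons false (negAll ε)))
              - 2*(G (Fin.cons true ε) * G (Fin.cons false ε))
              - 2*(G (Fin.cons true ε) * G (Fin.cons false (negAll ε)))
              - 2*(G (Fin.cons true (negAll ε)) * G (Fin.cons false ε))
              - 2*(G (Fin.cons true (negAll ε)) * G (Fin.cons false (negAll ε))) := by
          intro ε; ring
        rw [Finset.sum_congr rfl (fun ε _ => h1 ε)]
        simp only [Finset.sum_add_distrib, Finset.sum_sub_distrib]
        rw [sum_negAll (fun ε => (G (Fin.cons true ε))^2),
          sum_negAll (fun ε => (G (Fin.cons false ε))^2)]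
        have e3 : ∑ ε, 2*(G (Fin.cons true (negAll ε)) * G (Fin.cons false (negAll ε)))
            = 2 * ∑ ε, G (Fin.cons true ε) * G (Fin.cons false ε) := by
          rw [← Finset.mul_sum,
            sum_negAll (fun ε => G (Fin.cons true ε) * G (Fin.cons false ε))]
        have e4 : ∑ ε, 2*(G (Fin.cons true (negAll ε)) * G (Fin.cons false ε))
            = 2 * ∑ ε, G (Fin.cons true ε) * G (Fin.cons false (negAll ε)) := by
          rw [← Finset.mul_sum,
            ← sum_negAll (fun ε => G (Fin.cons true (negAll ε)) * G (Fin.cons false ε))]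
          congr 1
          refine Finset.sum_congr rfl fun ε _ => ?_
          rw [negAll_invol ε]
        rw [e3, e4]
        simp only [← Finset.mul_sum]
        ring
      -- expansions of the two cross-sums appearing in the goal
      have huv : ∑ ε, (G (Fin.cons true ε) - G (Fin.cons false ε))^2
          = (∑ ε, (G (Fin.cons true ε))^2) + (∑ ε, (G (Fin.cons false ε))^2)
            - 2 * ∑ ε, G (Fin.cons true ε) * G (Fin.cons false ε) :=
        exp_sub (fun ε => G (Fin.cons true ε)) (fun ε => G (Fin.cons false ε))
      have huvn : ∑ ε, (G (Fin.cons true ε) - G (Fin.cons false (negAll ε)))^2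
          = (∑ ε, (G (Fin.cons true ε))^2) + (∑ ε, (G (Fin.cons false ε))^2)
            - 2 * ∑ ε, G (Fin.cons true ε) * G (Fin.cons false (negAll ε)) := by
        rw [exp_sub (fun ε => G (Fin.cons true ε)) (fun ε => G (Fin.cons false (negAll ε))),
          sum_negAll (fun ε => (G (Fin.cons false ε))^2)]
      -- final assembly
      rw [hsum1, hsum2, hksum, hN, huv, huvn]
      have hpow : (2:ℝ)^(n+1) = 2*(2:ℝ)^n := by rw [pow_succ]; ring
      rw [hpow]
      rw [hNU] at ihu
      rw [hNV] at ihv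
      rw [hWsq, hWsum] at hcs
      linarith [ihu, ihv, hcs]


variable {Y : Type*} [NormedAddCommGroup Y] [NormedSpace ℝ Y]

noncomputable def rsum {n : ℕ} (z : Fin n → Y) (ε : Fin n → Bool) : Y :=
  ∑ i, sg (ε i) • z i


variable {Y : Type*} [NormedAddCommGroup Y] [NormedSpace ℝ Y]

lemma sum_flipAt {n : ℕ} (k : Fin n) (F : (Fin n → Bool) → ℝ) :
    ∑ η : Fin n → Bool, F (flipAt k η) = ∑ η : Fin n → Bool, F η :=
  Fintype.sum_bijective (flipAt k) ((flipAt_invol k).bijective) _ _ (fun _ => rfl)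

lemma sg_not (b : Bool) : sg (!b) = - sg b := by cases b <;> simp [sg]

lemma rsum_negAll {n : ℕ} (z : Fin n → Y) (η : Fin n → Bool) :
    rsum z (negAll η) = - rsum z η := by
  rw [rsum, rsum, ← Finset.sum_neg_distrib]
  refine Finset.sum_congr rfl fun i _ => ?_
  rw [show negAll η i = !(η i) from rfl, sg_not, neg_smul]

lemma rsum_sub_flip {n : ℕ} (z : Fin n → Y) (k : Fin n) (η : Fin n → Bool) :
    rsum z η - rsum z (flipAt k η) = (2 * sg (η k)) • z k := by
  rw [rsum, rsum, ← Finset.sum_sub_distrib]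
  have h : ∀ i ∈ Finset.univ, sg (η i) • z i - sg (flipAt k η i) • z i
      = if i = k then (2 * sg (η k)) • z k else 0 := by
    intro i _
    by_cases h : i = k
    · subst h; rw [if_pos rfl]
      have hf : flipAt i η i = !(η i) := by simp [flipAt]
      rw [hf, sg_not]
      match_scalars <;> ring
    · rw [if_neg h]
      have hf : flipAt k η i = η i := by simp [flipAt, Function.update_of_ne h]
      rw [hf, sub_self]
  rw [Finset.sum_congr rfl h, Finset.sum_ite_eq' Finset.univ k
    (fun _ => (2 * sg (η k)) • z k)]
  simp

lemma abs_sg (b : Bool) : |sg b| = 1 := by cases b <;> simp [sg]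

/-- CORE : Kahane-type inequality with constant 2 on the cube. -/
theorem core {n : ℕ} (z : Fin n → Y) :
    Real.sqrt (((2:ℝ)^n)⁻¹ * ∑ ε : Fin n → Bool, ‖rsum z ε‖^2)
      ≤ 2 * (((2:ℝ)^n)⁻¹ * ∑ ε : Fin n → Bool, ‖rsum z ε‖) := by
  -- choose norming functionals
  have hHB : ∀ η : Fin n → Bool, ∃ g : Y →L[ℝ] ℝ,
      ‖g‖ ≤ 1 ∧ g (rsum z η) = ‖rsum z η‖ := fun η =>
    exists_dual_vector'' ℝ (rsum z η)
  choose φ hφ1 hφ2 using hHB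
  set Q : ℝ := (2:ℝ)^n with hQ
  have hQpos : (0:ℝ) < Q := by positivity
  set f : (Fin n → Bool) → ℝ := fun η => ‖rsum z η‖ with hf
  -- evenness kills the N' term
  have heven : ∀ η, f (negAll η) = f η := by
    intro η
    show ‖rsum z (negAll η)‖ = ‖rsum z η‖
    rw [rsum_negAll, norm_neg]
  have hNzero : ∑ η, (f η - f (negAll η))^2 = 0 := by
    refine Finset.sum_eq_zero fun η _ => ?_
    rw [heven η]; ring
  -- variance bound
  have hvar := varTN n f
  rw [hNzero, add_zero] at hvar
  -- edge bounds
  have one_sided : ∀ (k : Fin n) (ξ : Fin n → Bool),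
      f ξ - f (flipAt k ξ) ≤ 2*|φ ξ (z k)| := by
    intro k ξ
    have hd : rsum z ξ = rsum z (flipAt k ξ) + (2 * sg (ξ k)) • z k := by
      rw [← rsum_sub_flip z k ξ]; abel
    have h1 : (φ ξ) (rsum z ξ)
        = (φ ξ) (rsum z (flipAt k ξ)) + (2*sg (ξ k)) * (φ ξ) (z k) := by
      conv_lhs => rw [hd]
      rw [map_add, _root_.map_smul, smul_eq_mul]
    have h2 : (φ ξ) (rsum z (flipAt k ξ)) ≤ f (flipAt k ξ) := by
      calc (φ ξ) (rsum z (flipAt k ξ))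
          ≤ |(φ ξ) (rsum z (flipAt k ξ))| := le_abs_self _
        _ = ‖(φ ξ) (rsum z (flipAt k ξ))‖ := (Real.norm_eq_abs _).symm
        _ ≤ ‖φ ξ‖ * ‖rsum z (flipAt k ξ)‖ := (φ ξ).le_opNorm _
        _ ≤ 1 * ‖rsum z (flipAt k ξ)‖ :=
            mul_le_mul_of_nonneg_right (hφ1 ξ) (norm_nonneg _)
        _ = f (flipAt k ξ) := one_mul _
    have h3 : (2*sg (ξ k)) * (φ ξ) (z k) ≤ 2*|φ ξ (z k)| := by
      calc (2*sg (ξ k)) * (φ ξ) (z k) ≤ |(2*sg (ξ k)) * (φ ξ) (z k)| := le_abs_self _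
        _ = 2*|φ ξ (z k)| := by
            rw [abs_mul, abs_mul, abs_sg, abs_two]; ring
    have h4 : f ξ = (φ ξ) (rsum z ξ) := (hφ2 ξ).symm
    rw [h4, h1]
    linarith
  have edge : ∀ (k : Fin n) (η : Fin n → Bool),
      (f η - f (flipAt k η))^2
        ≤ 4*(φ η (z k))^2 + 4*(φ (flipAt k η) (z k))^2 := by
    intro k η
    have hA := one_sided k η
    have hB := one_sided k (flipAt k η)
    rw [flipAt_invol k η] at hB
    rcases le_total 0 (f η - f (flipAt k η)) with hpos | hneg
    · have h5 : (f η - f (flipAt k η))^2 ≤ (2*|φ η (z k)|)^2 := by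
        apply sq_le_sq'
        · linarith [abs_nonneg (φ η (z k))]
        · exact hA
      have h6 : (2*|φ η (z k)|)^2 = 4*(φ η (z k))^2 := by
        rw [mul_pow, sq_abs]; ring
      nlinarith [sq_nonneg (φ (flipAt k η) (z k))]
    · have h5 : (f (flipAt k η) - f η)^2 ≤ (2*|φ (flipAt k η) (z k)|)^2 := by
        apply sq_le_sq'
        · linarith [abs_nonneg (φ (flipAt k η) (z k))]
        · exact hB
      have h6 : (2*|φ (flipAt k η) (z k)|)^2 = 4*(φ (flipAt k η) (z k))^2 := by
        rw [mul_pow, sq_abs]; ring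
      have h7 : (f η - f (flipAt k η))^2 = (f (flipAt k η) - f η)^2 := by ring
      nlinarith [sq_nonneg (φ η (z k))]
  -- T' bound
  have hT : (∑ k : Fin n, ∑ η, (f η - f (flipAt k η))^2)
      ≤ 8 * ∑ η, ∑ k : Fin n, (φ η (z k))^2 := by
    have h1 : ∀ k : Fin n, ∑ η, (f η - f (flipAt k η))^2
        ≤ (∑ η, 4*(φ η (z k))^2) + ∑ η, 4*(φ (flipAt k η) (z k))^2 := by
      intro k
      rw [← Finset.sum_add_distrib]
      exact Finset.sum_le_sum fun η _ => edge k η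
    have h2 : ∀ k : Fin n, ∑ η, 4*(φ (flipAt k η) (z k))^2
        = ∑ η, 4*(φ η (z k))^2 := fun k =>
      sum_flipAt k (fun η => 4*(φ η (z k))^2)
    calc ∑ k : Fin n, ∑ η, (f η - f (flipAt k η))^2
        ≤ ∑ k : Fin n, ((∑ η, 4*(φ η (z k))^2) + ∑ η, 4*(φ (flipAt k η) (z k))^2) :=
          Finset.sum_le_sum fun k _ => h1 k
      _ = ∑ k : Fin n, 8 * ∑ η, (φ η (z k))^2 := by
          refine Finset.sum_congr rfl fun k _ => ?_
          rw [h2 k, ← Finset.sum_add_distrib, Finset.mul_sum]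
          exact Finset.sum_congr rfl fun η _ => by ring
      _ = 8 * ∑ k : Fin n, ∑ η, (φ η (z k))^2 := by rw [← Finset.mul_sum]
      _ = 8 * ∑ η, ∑ k : Fin n, (φ η (z k))^2 := by rw [Finset.sum_comm]
  -- Khintchine per η
  have hKh : ∀ η : Fin n → Bool, Q^2 * ∑ k : Fin n, (φ η (z k))^2
      ≤ 3 * (∑ ρ, f ρ)^2 := by
    intro η
    have h1 := khintchine (fun k => (φ η) (z k))
    have h2 : ∀ ρ : Fin n → Bool, |wsum (fun k => (φ η) (z k)) ρ| ≤ f ρ := by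
      intro ρ
      have h3 : wsum (fun k => (φ η) (z k)) ρ = (φ η) (rsum z ρ) := by
        rw [wsum, rsum, map_sum]
        refine Finset.sum_congr rfl fun k _ => ?_
        rw [_root_.map_smul, smul_eq_mul]
      rw [h3]
      calc |(φ η) (rsum z ρ)| = ‖(φ η) (rsum z ρ)‖ := (Real.norm_eq_abs _).symm
        _ ≤ ‖φ η‖ * ‖rsum z ρ‖ := (φ η).le_opNorm _
        _ ≤ 1 * ‖rsum z ρ‖ := mul_le_mul_of_nonneg_right (hφ1 η) (norm_nonneg _)
        _ = f ρ := one_mul _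
    have h4 : (∑ ρ, |wsum (fun k => (φ η) (z k)) ρ|)^2 ≤ (∑ ρ, f ρ)^2 := by
      apply sq_le_sq'
      · have := Finset.sum_nonneg (fun ρ (_ : ρ ∈ Finset.univ) =>
          abs_nonneg (wsum (fun k => (φ η) (z k)) ρ))
        have hfs := Finset.sum_nonneg (fun ρ (_ : ρ ∈ Finset.univ) =>
          norm_nonneg (rsum z ρ))
        linarith
      · exact Finset.sum_le_sum fun ρ _ => h2 ρ
    calc Q^2 * ∑ k : Fin n, (φ η (z k))^2
        ≤ 3 * (∑ ρ, |wsum (fun k => (φ η) (z k)) ρ|)^2 := h1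
      _ ≤ 3 * (∑ ρ, f ρ)^2 := by linarith
  -- combine
  have hsumKh : Q^2 * (∑ η, ∑ k : Fin n, (φ η (z k))^2) ≤ Q * (3 * (∑ ρ, f ρ)^2) := by
    rw [Finset.mul_sum]
    calc ∑ η, Q^2 * ∑ k : Fin n, (φ η (z k))^2
        ≤ ∑ η : Fin n → Bool, 3 * (∑ ρ, f ρ)^2 := Finset.sum_le_sum fun η _ => hKh η
      _ = Q * (3 * (∑ ρ, f ρ)^2) := by
          rw [Finset.sum_const, nsmul_eq_mul, card_cube]
  -- chain : 8(QΣf² − (Σf)²) ≤ Q·T' ≤ 8Q·ΣΣφ² and Q²ΣΣφ² ≤ 3Q(Σf)²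
  have main : Q * (∑ η, (f η)^2) ≤ 4 * (∑ η, f η)^2 := by
    have c1 : 8 * (Q * (∑ η, (f η)^2) - (∑ η, f η)^2)
        ≤ Q * (8 * ∑ η, ∑ k : Fin n, (φ η (z k))^2) := by
      calc 8 * (Q * (∑ η, (f η)^2) - (∑ η, f η)^2)
          ≤ Q * (∑ k : Fin n, ∑ η, (f η - f (flipAt k η))^2) := hvar
        _ ≤ Q * (8 * ∑ η, ∑ k : Fin n, (φ η (z k))^2) :=
            mul_le_mul_of_nonneg_left hT (le_of_lt hQpos)
    -- multiply c1 by Q and use hsumKh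
    have c2 : Q * (8 * (Q * (∑ η, (f η)^2) - (∑ η, f η)^2))
        ≤ Q * (Q * (8 * ∑ η, ∑ k : Fin n, (φ η (z k))^2)) :=
      mul_le_mul_of_nonneg_left c1 (le_of_lt hQpos)
    have c3 : Q * (Q * (8 * ∑ η, ∑ k : Fin n, (φ η (z k))^2))
        = 8 * (Q^2 * (∑ η, ∑ k : Fin n, (φ η (z k))^2)) := by ring
    have c4 : Q * (Q * (8 * ∑ η, ∑ k : Fin n, (φ η (z k))^2))
        ≤ 8 * (Q * (3 * (∑ ρ, f ρ)^2)) := by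
      rw [c3]
      linarith [hsumKh]
    -- together: 8Q(QΣf² − (Σf)²) ≤ 24Q(Σf)²  ⇒ divide by 8Q
    have c5 : Q * (8 * (Q * (∑ η, (f η)^2) - (∑ η, f η)^2))
        ≤ 8 * (Q * (3 * (∑ ρ, f ρ)^2)) := le_trans c2 c4
    have c6 : (Q * (∑ η, (f η)^2) - (∑ η, f η)^2) * (8*Q) ≤ (3 * (∑ η, f η)^2) * (8*Q) := by
      calc (Q * (∑ η, (f η)^2) - (∑ η, f η)^2) * (8*Q)
          = Q * (8 * (Q * (∑ η, (f η)^2) - (∑ η, f η)^2)) := by ring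
        _ ≤ 8 * (Q * (3 * (∑ ρ, f ρ)^2)) := c5
        _ = (3 * (∑ η, f η)^2) * (8*Q) := by ring
    have c7 := le_of_mul_le_mul_right c6 (by positivity : (0:ℝ) < 8*Q)
    linarith
  -- take square roots
  have hfnn : (0:ℝ) ≤ ∑ η, f η := Finset.sum_nonneg fun η _ => norm_nonneg _
  have hstep : ((2:ℝ)^n)⁻¹ * ∑ ε : Fin n → Bool, ‖rsum z ε‖^2
      ≤ (2 * (((2:ℝ)^n)⁻¹ * ∑ ε : Fin n → Bool, ‖rsum z ε‖))^2 := by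
    have h1 : (2 * (Q⁻¹ * ∑ η, f η))^2 = 4 * (Q⁻¹)^2 * (∑ η, f η)^2 := by ring
    have h2 : Q⁻¹ * ∑ η, (f η)^2 ≤ 4 * (Q⁻¹)^2 * (∑ η, f η)^2 := by
      have h3 : Q⁻¹ * (Q * (∑ η, (f η)^2)) ≤ Q⁻¹ * (4 * (∑ η, f η)^2) :=
        mul_le_mul_of_nonneg_left main (by positivity)
      have h4 : Q⁻¹ * (Q * (∑ η, (f η)^2)) = Q * (Q⁻¹ * (∑ η, (f η)^2)) := by ring
      have h5 : Q⁻¹ * (4 * (∑ η, f η)^2) = Q * (4 * (Q⁻¹)^2 * (∑ η, f η)^2) := by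
        field_simp
      rw [h4, h5] at h3
      exact le_of_mul_le_mul_left h3 hQpos
    calc ((2:ℝ)^n)⁻¹ * ∑ ε : Fin n → Bool, ‖rsum z ε‖^2
        = Q⁻¹ * ∑ η, (f η)^2 := rfl
      _ ≤ 4 * (Q⁻¹)^2 * (∑ η, f η)^2 := h2
      _ = (2 * (Q⁻¹ * ∑ η, f η))^2 := h1.symm
  calc Real.sqrt (((2:ℝ)^n)⁻¹ * ∑ ε : Fin n → Bool, ‖rsum z ε‖^2)
      ≤ Real.sqrt ((2 * (((2:ℝ)^n)⁻¹ * ∑ ε : Fin n → Bool, ‖rsum z ε‖))^2) :=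
        Real.sqrt_le_sqrt hstep
    _ = 2 * (((2:ℝ)^n)⁻¹ * ∑ ε : Fin n → Bool, ‖rsum z ε‖) := by
        apply Real.sqrt_sq
        positivity



variable {Y : Type*} [NormedAddCommGroup Y] [NormedSpace ℝ Y]

/-- two-point convexity: for `|a| ≤ 1`,
`‖A + a•v‖ + ‖A - a•v‖ ≤ ‖A + v‖ + ‖A - v‖`. -/
lemma two_point (A v : Y) (a : ℝ) (ha : |a| ≤ 1) :
    ‖A + a • v‖ + ‖A - a • v‖ ≤ ‖A + v‖ + ‖A - v‖ := by
  have h1 : -1 ≤ a := neg_le_of_abs_le ha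
  have h2 : a ≤ 1 := le_of_abs_le ha
  set θ : ℝ := (1 + a) / 2 with hθ
  have hθ0 : 0 ≤ θ := by rw [hθ]; linarith
  have hθ1 : 0 ≤ 1 - θ := by rw [hθ]; linarith
  have e1 : A + a • v = θ • (A + v) + (1 - θ) • (A - v) := by
    rw [hθ]; match_scalars <;> ring
  have e2 : A - a • v = (1 - θ) • (A + v) + θ • (A - v) := by
    rw [hθ]; match_scalars <;> ring
  calc ‖A + a • v‖ + ‖A - a • v‖
      ≤ (‖θ • (A + v)‖ + ‖(1 - θ) • (A - v)‖) +
        (‖(1 - θ) • (A + v)‖ + ‖θ • (A - v)‖) := by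
        rw [e1, e2]; exact add_le_add (norm_add_le _ _) (norm_add_le _ _)
    _ = ‖A + v‖ + ‖A - v‖ := by
        simp only [norm_smul, Real.norm_eq_abs, abs_of_nonneg hθ0, abs_of_nonneg hθ1]
        ring

theorem contraction : ∀ {n : ℕ} (x₀ : Y) (z : Fin n → Y) (a : Fin n → ℝ),
    (∀ i, |a i| ≤ 1) →
    ∑ ε : Fin n → Bool, ‖x₀ + ∑ i, (a i * sg (ε i)) • z i‖
      ≤ ∑ ε : Fin n → Bool, ‖x₀ + rsum z ε‖ := by
  intro n
  induction n with
  | zero =>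
      intro x₀ z a _
      simp [rsum]
  | succ n ih =>
      intro x₀ z a ha
      have reidx : ∀ (F : (Fin (n+1) → Bool) → ℝ),
          ∑ ε : Fin (n+1) → Bool, F ε
            = ∑ b : Bool, ∑ ε : Fin n → Bool, F (Fin.cons b ε) := by
        intro F
        have h1 : ∑ p : Bool × (Fin n → Bool), F (Fin.cons p.1 p.2)
            = ∑ b : Bool, ∑ ε : Fin n → Bool, F (Fin.cons b ε) :=
          Fintype.sum_prod_type _
        rw [← h1]
        exact (Fintype.sum_equiv (Fin.consEquiv fun _ => Bool) _ _ (fun p => rfl)).symm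
      rw [reidx, reidx]
      have splitsum : ∀ (c : Fin (n+1) → ℝ) (b : Bool) (ε : Fin n → Bool),
          (∑ i, (c i * sg ((Fin.cons b ε : Fin (n+1) → Bool) i)) • z i)
            = (c 0 * sg b) • z 0 + ∑ i : Fin n, (c i.succ * sg (ε i)) • z i.succ := by
        intro c b ε
        rw [Fin.sum_univ_succ]
        simp
      calc ∑ b : Bool, ∑ ε : Fin n → Bool,
              ‖x₀ + ∑ i, (a i * sg ((Fin.cons b ε : Fin (n+1) → Bool) i)) • z i‖
          ≤ ∑ b : Bool, ∑ ε : Fin n → Bool,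
              ‖(x₀ + (a 0 * sg b) • z 0) + rsum (fun i => z i.succ) ε‖ := by
            refine Finset.sum_le_sum fun b _ => ?_
            have := ih (x₀ + (a 0 * sg b) • z 0) (fun i => z i.succ)
              (fun i => a i.succ) (fun i => ha i.succ)
            refine le_trans (le_of_eq ?_) this
            refine Finset.sum_congr rfl fun ε _ => ?_
            rw [splitsum a b ε, ← add_assoc]
        _ ≤ ∑ b : Bool, ∑ ε : Fin n → Bool,
              ‖(x₀ + sg b • z 0) + rsum (fun i => z i.succ) ε‖ := by
            rw [Finset.sum_comm, Finset.sum_comm (γ := Bool)]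
            refine Finset.sum_le_sum fun ε _ => ?_
            have hb : ∀ (w : Y), ∑ b : Bool, ‖w + (a 0 * sg b) • z 0‖
                ≤ ∑ b : Bool, ‖w + sg b • z 0‖ := by
              intro w
              have := two_point w (z 0) (a 0) (ha 0)
              simpa [sg, Fintype.sum_bool, mul_comm, mul_smul, sub_eq_add_neg,
                neg_smul] using this
            have h := hb (x₀ + rsum (fun i => z i.succ) ε)
            calc ∑ b : Bool, ‖x₀ + (a 0 * sg b) • z 0 + rsum (fun i => z i.succ) ε‖
                = ∑ b : Bool, ‖(x₀ + rsum (fun i => z i.succ) ε) + (a 0 * sg b) • z 0‖ := by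
                  refine Finset.sum_congr rfl fun b _ => ?_
                  congr 1; abel
              _ ≤ ∑ b : Bool, ‖(x₀ + rsum (fun i => z i.succ) ε) + sg b • z 0‖ := h
              _ = ∑ b : Bool, ‖x₀ + sg b • z 0 + rsum (fun i => z i.succ) ε‖ := by
                  refine Finset.sum_congr rfl fun b _ => ?_
                  congr 1; abel
        _ = ∑ b : Bool, ∑ ε : Fin n → Bool, ‖x₀ + rsum z (Fin.cons b ε)‖ := by
            refine Finset.sum_congr rfl fun b _ => Finset.sum_congr rfl fun ε _ => ?_
            congr 1
            simp only [rsum, Fin.sum_univ_succ, Fin.cons_zero, Fin.cons_succ, add_assoc]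


lemma radAvg_eq {n : ℕ} (z : Fin n → Y) :
    radAvg z = Real.sqrt (((2:ℝ)^n)⁻¹ * ∑ ε : Fin n → Bool, ‖rsum z ε‖^2) := rfl

end RboundAux

open RboundAux

/-- If `t ↦ N(t) ∈ B(X,Y)` is strongly measurable with `∫‖N(t)x‖dμ(t) ≤ C‖x‖`, then
the integral means `N_h x = ∫ h(t) N(t)x dμ(t)`, for `‖h‖_∞ ≤ 1`, form an R-bounded
family with R-bound at most `2C`. -/
theorem integral_means_Rbounded_of_uniformly_integrable
    {Ω X Y : Type*} [MeasurableSpace Ω]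
    [NormedAddCommGroup X] [NormedSpace ℝ X] [NormedAddCommGroup Y] [NormedSpace ℝ Y]
    (μ : Measure Ω) [SigmaFinite μ] (N : Ω → X →L[ℝ] Y) (C : ℝ)
    (hmeas : ∀ x : X, StronglyMeasurable fun t => N t x)
    (hint : ∀ x : X, Integrable (fun t => N t x) μ)
    (hbound : ∀ x : X, (∫ t, ‖N t x‖ ∂μ) ≤ C * ‖x‖) :
    ∀ (m : ℕ) (h : Fin m → Ω → ℝ),
      (∀ k, Measurable (h k)) → (∀ k t, |h k t| ≤ 1) →
      ∀ x : Fin m → X,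
        radAvg (fun k => ∫ t, h k t • N t (x k) ∂μ) ≤ 2 * C * radAvg x := by
  intro m h hmh hb x
  by_cases hC : 0 ≤ C
  swap
  · -- C < 0 : all x k must vanish
    push_neg at hC
    have hx0 : ∀ k, x k = 0 := by
      intro k
      by_contra hk
      have h1 : (0:ℝ) ≤ ∫ t, ‖N t (x k)‖ ∂μ := integral_nonneg fun t => norm_nonneg _
      have h2 := hbound (x k)
      have h3 : 0 < ‖x k‖ := norm_pos_iff.mpr hk
      nlinarith
    have hy0 : (fun k => ∫ t, h k t • N t (x k) ∂μ) = fun _ => (0:Y) := by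
      funext k; rw [hx0 k]; simp
    have hza : radAvg (fun _ : Fin m => (0:Y)) = 0 := by
      rw [radAvg]
      simp
    rw [hy0, hza]
    have hxa : radAvg x = 0 := by
      have : x = fun _ => (0:X) := funext hx0
      rw [this, radAvg]; simp
    rw [hxa]; simp
  · -- main case
    set y : Fin m → Y := fun k => ∫ t, h k t • N t (x k) ∂μ with hy
    set P : ℝ := ((2:ℝ)^m)⁻¹ with hP
    have hP0 : 0 ≤ P := by positivity
    -- integrability of the basic integrands
    have hintg : ∀ (ε : Fin m → Bool) (i : Fin m),
        Integrable (fun t => (h i t * sg (ε i)) • N t (x i)) μ := by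
      intro ε i
      refine Integrable.mono' ((hint (x i)).norm) ?_ ?_
      · exact (((hmh i).aemeasurable.mul_const _).aestronglyMeasurable).smul
          (hmeas (x i)).aestronglyMeasurable
      · refine Filter.Eventually.of_forall fun t => ?_
        rw [norm_smul]
        have h1 : |h i t * sg (ε i)| ≤ 1 := by
          rw [abs_mul]
          have := hb i t
          have h2 : |sg (ε i)| = 1 := by cases (ε i) <;> simp [sg]
          rw [h2, mul_one]; exact this
        calc ‖h i t * sg (ε i)‖ * ‖N t (x i)‖
            ≤ 1 * ‖N t (x i)‖ := by
              apply mul_le_mul_of_nonneg_right _ (norm_nonneg _)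
              exact h1
          _ = ‖N t (x i)‖ := one_mul _
    have hintu : ∀ (ε : Fin m → Bool),
        Integrable (fun t => ∑ i, (h i t * sg (ε i)) • N t (x i)) μ :=
      fun ε => integrable_finset_sum _ (fun i _ => hintg ε i)
    -- step 1 : the signed sum of y's as one integral
    have key1 : ∀ ε : Fin m → Bool,
        rsum y ε = ∫ t, (∑ i, (h i t * sg (ε i)) • N t (x i)) ∂μ := by
      intro ε
      rw [rsum, integral_finset_sum _ (fun i _ => hintg ε i)]
      refine Finset.sum_congr rfl fun i _ => ?_
      rw [hy]
      rw [← integral_smul]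
      refine integral_congr_ae (Filter.Eventually.of_forall fun t => ?_)
      show sg (ε i) • (h i t • N t (x i)) = (h i t * sg (ε i)) • N t (x i)
      rw [smul_smul, mul_comm]
    -- step 2 : bound each by the integral of norms
    have key2 : ∀ ε : Fin m → Bool,
        ‖rsum y ε‖ ≤ ∫ t, ‖∑ i, (h i t * sg (ε i)) • N t (x i)‖ ∂μ := by
      intro ε; rw [key1 ε]; exact norm_integral_le_integral_norm _
    -- step 3/4 : sum over ε, swap, contract
    have key3 : ∑ ε : Fin m → Bool, ‖rsum y ε‖
        ≤ ∑ η : Fin m → Bool, (C * ‖rsum x η‖) := by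
      calc ∑ ε : Fin m → Bool, ‖rsum y ε‖
          ≤ ∑ ε : Fin m → Bool, ∫ t, ‖∑ i, (h i t * sg (ε i)) • N t (x i)‖ ∂μ :=
            Finset.sum_le_sum fun ε _ => key2 ε
        _ = ∫ t, ∑ ε : Fin m → Bool, ‖∑ i, (h i t * sg (ε i)) • N t (x i)‖ ∂μ :=
            (integral_finset_sum _ (fun ε _ => (hintu ε).norm)).symm
        _ ≤ ∫ t, ∑ η : Fin m → Bool, ‖N t (rsum x η)‖ ∂μ := by
            refine integral_mono (integrable_finset_sum _ (fun ε _ => (hintu ε).norm))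
              (integrable_finset_sum _ (fun η _ => (hint (rsum x η)).norm)) ?_
            intro t
            have hc := contraction (0:Y) (fun i => N t (x i)) (fun i => h i t)
              (fun i => hb i t)
            simp only [zero_add] at hc
            refine le_trans (le_of_eq ?_) (le_trans hc (le_of_eq ?_))
            · rfl
            · refine Finset.sum_congr rfl fun η _ => ?_
              congr 1
              rw [rsum, rsum, map_sum]
              exact Finset.sum_congr rfl fun i _ => (map_smul (N t) _ _).symm
        _ = ∑ η : Fin m → Bool, ∫ t, ‖N t (rsum x η)‖ ∂μ :=
            integral_finset_sum _ (fun η _ => (hint (rsum x η)).norm)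
        _ ≤ ∑ η : Fin m → Bool, (C * ‖rsum x η‖) :=
            Finset.sum_le_sum fun η _ => hbound (rsum x η)
    -- step 5 : Cauchy–Schwarz on the finite cube
    have key4 : ∑ η : Fin m → Bool, ‖rsum x η‖
        ≤ Real.sqrt ((2:ℝ)^m) * Real.sqrt (∑ η : Fin m → Bool, ‖rsum x η‖^2) := by
      have h1 : (∑ η : Fin m → Bool, ‖rsum x η‖)^2
          ≤ (Finset.univ.card : ℝ) * ∑ η : Fin m → Bool, ‖rsum x η‖^2 :=
        sq_sum_le_card_mul_sum_sq
      have hcard : ((Finset.univ : Finset (Fin m → Bool)).card : ℝ) = (2:ℝ)^m := by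
        simp [Finset.card_univ]
      rw [hcard] at h1
      have h2 : 0 ≤ ∑ η : Fin m → Bool, ‖rsum x η‖ :=
        Finset.sum_nonneg fun η _ => norm_nonneg _
      calc ∑ η : Fin m → Bool, ‖rsum x η‖
          = Real.sqrt ((∑ η : Fin m → Bool, ‖rsum x η‖)^2) := (Real.sqrt_sq h2).symm
        _ ≤ Real.sqrt ((2:ℝ)^m * ∑ η : Fin m → Bool, ‖rsum x η‖^2) :=
            Real.sqrt_le_sqrt h1
        _ = Real.sqrt ((2:ℝ)^m) * Real.sqrt (∑ η : Fin m → Bool, ‖rsum x η‖^2) := by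
            rw [Real.sqrt_mul (by positivity)]
    -- assemble
    have hPsq : P * Real.sqrt ((2:ℝ)^m) = Real.sqrt P := by
      have hs : Real.sqrt ((2:ℝ)^m) * Real.sqrt ((2:ℝ)^m) = (2:ℝ)^m :=
        Real.mul_self_sqrt (by positivity)
      have hspos : (0:ℝ) < Real.sqrt ((2:ℝ)^m) := Real.sqrt_pos.mpr (by positivity)
      rw [hP, Real.sqrt_inv, ← hs]
      field_simp
      rw [Real.sqrt_sq hspos.le]
    have hPA : ∀ A : ℝ, 0 ≤ A →
        P * (Real.sqrt ((2:ℝ)^m) * Real.sqrt A) = Real.sqrt (P * A) := by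
      intro A hA
      rw [Real.sqrt_mul hP0, ← mul_assoc, hPsq]
    calc radAvg y
        = Real.sqrt (P * ∑ ε : Fin m → Bool, ‖rsum y ε‖^2) := radAvg_eq y
      _ ≤ 2 * (P * ∑ ε : Fin m → Bool, ‖rsum y ε‖) := core y
      _ ≤ 2 * (P * ∑ η : Fin m → Bool, (C * ‖rsum x η‖)) := by
          have := mul_le_mul_of_nonneg_left key3 hP0
          linarith
      _ = 2 * C * (P * ∑ η : Fin m → Bool, ‖rsum x η‖) := by
          rw [← Finset.mul_sum]; ring
      _ ≤ 2 * C * (P * (Real.sqrt ((2:ℝ)^m) * Real.sqrt (∑ η : Fin m → Bool, ‖rsum x η‖^2))) := by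
          have h2C : (0:ℝ) ≤ 2 * C := by linarith
          have := mul_le_mul_of_nonneg_left key4 hP0
          nlinarith [Real.sqrt_nonneg (∑ η : Fin m → Bool, ‖rsum x η‖^2),
            Real.sqrt_nonneg ((2:ℝ)^m)]
      _ = 2 * C * radAvg x := by
          rw [radAvg_eq]
          rw [← hPA _ (by positivity)]
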